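/- Fix e > 1 and let β ∈ Q_+ = ℤ_{≥0}-span of {α_i : i ∈ ℤ/e}. Then β is a positive root (i.e., β = α(t,h) for some t ∈ ℤ/e, h ≥ 1) if and only if β = cont(ξ) for some ribbon ξ ⊆ ℤ×ℤ. -/

import Mathlib

open Finset

abbrev Node : Type := ℤ × ℤ

/-- `v` is weakly southeast of `u` (product order). -/
def SE (u v : Node) : Prop := u.1 ≤ v.1 ∧ u.2 ≤ v.2

/-- `v` is weakly northeast of `u` (`u ↗ v`). -/
def NEr (u v : Node) : Prop := v.1 ≤ u.1 ∧ u.2 ≤ v.2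

/-- `v` is strictly northeast of `u` (`u ⇗ v`). -/
def SNE (u v : Node) : Prop := v.1 < u.1 ∧ u.2 < v.2

def IsSkew (τ : Finset Node) : Prop :=
  ∀ u ∈ τ, ∀ w ∈ τ, ∀ v : Node, SE u v → SE v w → v ∈ τ

def Adj (u v : Node) : Prop :=
  v = u + (1, 0) ∨ v = u + (-1, 0) ∨ v = u + (0, 1) ∨ v = u + (0, -1)

def PathIn (τ : Finset Node) (u v : Node) : Prop :=
  Relation.ReflTransGen (fun a b => a ∈ τ ∧ b ∈ τ ∧ Adj a b) u v

def IsConnectedShape (τ : Finset Node) : Prop :=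
  ∀ u ∈ τ, ∀ v ∈ τ, PathIn τ u v

def Cornered (τ : Finset Node) : Prop :=
  (∀ u ∈ τ, ∀ u' ∈ τ, (u + (1, 0) ∉ τ ∧ u + (0, -1) ∉ τ) →
      (u' + (1, 0) ∉ τ ∧ u' + (0, -1) ∉ τ) → u = u') ∧
  (∀ v ∈ τ, ∀ v' ∈ τ, (v + (-1, 0) ∉ τ ∧ v + (0, 1) ∉ τ) →
      (v' + (-1, 0) ∉ τ ∧ v' + (0, 1) ∉ τ) → v = v')

def DiagConvex (τ : Finset Node) : Prop :=
  ∀ u ∈ τ, ∀ w ∈ τ, ∀ v : Node,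
    u.2 - u.1 = v.2 - v.1 → v.2 - v.1 = w.2 - w.1 → SE u v → SE v w → v ∈ τ

def Thin (τ : Finset Node) : Prop :=
  ∀ u ∈ τ, ∀ v ∈ τ, u.2 - u.1 = v.2 - v.1 → u = v

def IsRibbon (ξ : Finset Node) : Prop :=
  ξ.Nonempty ∧ IsSkew ξ ∧ IsConnectedShape ξ ∧ Thin ξ

def MaxSW (τ : Finset Node) (u : Node) : Prop :=
  u ∈ τ ∧ ∀ v ∈ τ, NEr v u → v = u

def MaxNE (τ : Finset Node) (v : Node) : Prop :=
  v ∈ τ ∧ ∀ w ∈ τ, NEr v w → w = v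

def IsNEPath (z : ℕ → Node) (k : ℕ) : Prop :=
  ∀ i, i + 1 < k → z (i + 1) = z i + (-1, 0) ∨ z (i + 1) = z i + (0, 1)

def IsSEPath (z : ℕ → Node) (k : ℕ) : Prop :=
  ∀ i, i + 1 < k → z (i + 1) = z i + (1, 0) ∨ z (i + 1) = z i + (0, 1)

def SERemovable (τ μ : Finset Node) : Prop :=
  μ ⊆ τ ∧ ∀ u ∈ μ, ∀ v ∈ τ \ μ, ¬ SE u v

/-- Residue of a node, in `ZMod e`. -/
def res (e : ℕ) (u : Node) : ZMod e := ((u.2 - u.1 : ℤ) : ZMod e)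

/-- Content of a finite set of nodes, as an element of the free module on `ZMod e`. -/
def cont (e : ℕ) (τ : Finset Node) : ZMod e → ℤ :=
  fun i => ((τ.filter (fun u => res e u = i)).card : ℤ)

/-- `α(t,h) = α_t + α_{t+1} + ⋯ + α_{t+h-1}` (indices mod `e`). -/
def alphaR (e : ℕ) (t : ZMod e) (h : ℕ) : ZMod e → ℤ :=
  fun i => (((Finset.range h).filter (fun j : ℕ => t + ((j : ℕ) : ZMod e) = i)).card : ℤ)

def IsPosRoot (e : ℕ) (β : ZMod e → ℤ) : Prop :=
  ∃ t : ZMod e, ∃ h : ℕ, 1 ≤ h ∧ β = alphaR e t h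

/-- The null root `δ = α_0 + ⋯ + α_{e-1}`. -/
def deltaR (e : ℕ) : ZMod e → ℤ := fun _ => 1

/-- Imaginary elements: positive multiples of `δ`. -/
def IsImag (e : ℕ) (β : ZMod e → ℤ) : Prop :=
  ∃ m : ℕ, 1 ≤ m ∧ β = fun _ => (m : ℤ)

/-- Indivisible positive roots `Ψ`: real positive roots together with `δ`. -/
def IsIndiv (e : ℕ) (β : ZMod e → ℤ) : Prop :=
  (∃ t : ZMod e, ∃ h : ℕ, 1 ≤ h ∧ ¬ (e ∣ h) ∧ β = alphaR e t h) ∨ β = deltaR e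

/-- A convex preorder on the positive roots. -/
def ConvexPreorder (e : ℕ) (R : (ZMod e → ℤ) → (ZMod e → ℤ) → Prop) : Prop :=
  (∀ β, IsPosRoot e β → R β β) ∧
  (∀ β γ ν, IsPosRoot e β → IsPosRoot e γ → IsPosRoot e ν →
      R β γ → R γ ν → R β ν) ∧
  (∀ β γ, IsPosRoot e β → IsPosRoot e γ → (R β γ ∨ R γ β)) ∧
  (∀ β γ, IsPosRoot e β → IsPosRoot e γ → R β γ → IsPosRoot e (β + γ) →
      R β (β + γ) ∧ R (β + γ) γ) ∧
  (∀ β γ, IsPosRoot e β → IsPosRoot e γ →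
      ((R β γ ∧ R γ β) ↔ (β = γ ∨ (IsImag e β ∧ IsImag e γ))))

/-- `β ≻ γ`. -/
def StrictR (e : ℕ) (R : (ZMod e → ℤ) → (ZMod e → ℤ) → Prop)
    (β γ : ZMod e → ℤ) : Prop := R β γ ∧ ¬ R γ β

/-- `θ` is a sum of positive roots strictly smaller than `β`. -/
def SumRootsLt (e : ℕ) (R : (ZMod e → ℤ) → (ZMod e → ℤ) → Prop)
    (β θ : ZMod e → ℤ) : Prop :=
  ∃ k : ℕ, ∃ γ : Fin k → (ZMod e → ℤ),
    (∀ i, IsPosRoot e (γ i) ∧ StrictR e R β (γ i)) ∧ θ = ∑ i, γ i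

/-- `θ` is a sum of positive roots strictly greater than `β`. -/
def SumRootsGt (e : ℕ) (R : (ZMod e → ℤ) → (ZMod e → ℤ) → Prop)
    (β θ : ZMod e → ℤ) : Prop :=
  ∃ k : ℕ, ∃ γ : Fin k → (ZMod e → ℤ),
    (∀ i, IsPosRoot e (γ i) ∧ StrictR e R (γ i) β) ∧ θ = ∑ i, γ i

/-- A two-tile tableau `(λ1, λ2)` for `τ`. -/
def IsTableau2 (τ lam1 lam2 : Finset Node) : Prop :=
  IsSkew lam1 ∧ IsSkew lam2 ∧ Disjoint lam1 lam2 ∧ lam1 ∪ lam2 = τ ∧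
  ∀ u ∈ lam2, ∀ v ∈ lam1, ¬ SE u v

/-- A cuspidal skew shape (with respect to the preorder `R`). -/
def IsCuspidal (e : ℕ) (R : (ZMod e → ℤ) → (ZMod e → ℤ) → Prop)
    (τ : Finset Node) : Prop :=
  IsPosRoot e (cont e τ) ∧
  ∀ lam1 lam2 : Finset Node, IsTableau2 τ lam1 lam2 →
    SumRootsLt e R (cont e τ) (cont e lam1) ∧
    SumRootsGt e R (cont e τ) (cont e lam2)

/-- An SE-removable ribbon in `τ`. -/
def SERemRibbon (τ ξ : Finset Node) : Prop := IsRibbon ξ ∧ SERemovable τ ξ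

/-- A minimal SE-removable ribbon in `τ`. -/
def MinSERem (e : ℕ) (R : (ZMod e → ℤ) → (ZMod e → ℤ) → Prop)
    (τ ξ : Finset Node) : Prop :=
  SERemRibbon τ ξ ∧ ∀ ν, SERemRibbon τ ν → R (cont e ν) (cont e ξ)

/-! ### Auxiliary material -/

def ndiag (u : Node) : ℤ := u.2 - u.1

lemma adj_iff {u v : Node} : Adj u v ↔
    ((v.1 = u.1 + 1 ∧ v.2 = u.2) ∨ (v.1 = u.1 - 1 ∧ v.2 = u.2) ∨
      (v.1 = u.1 ∧ v.2 = u.2 + 1) ∨ (v.1 = u.1 ∧ v.2 = u.2 - 1)) := by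
  simp only [Adj, Prod.ext_iff, Prod.fst_add, Prod.snd_add]
  omega

lemma adj_symm' {u v : Node} (h : Adj u v) : Adj v u := by
  rw [adj_iff] at h ⊢; omega

lemma pathIn_symm {τ : Finset Node} {u v : Node} (h : PathIn τ u v) : PathIn τ v u := by
  induction h with
  | refl => exact Relation.ReflTransGen.refl
  | tail _ hbc ih =>
      exact Relation.ReflTransGen.head ⟨hbc.2.1, hbc.1, adj_symm' hbc.2.2⟩ ih

lemma adj_ndiag {u v : Node} (h : Adj u v) : ndiag v = ndiag u + 1 ∨ ndiag v = ndiag u - 1 := by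
  rw [adj_iff] at h; unfold ndiag; omega

/-- Discrete intermediate value theorem along a path. -/
lemma ivt {τ : Finset Node} {u v : Node} (h : PathIn τ u v) (hu : u ∈ τ) :
    ∀ d : ℤ, ndiag u ≤ d → d ≤ ndiag v → ∃ w ∈ τ, ndiag w = d := by
  induction h using Relation.ReflTransGen.head_induction_on with
  | refl => intro d h1 h2; exact ⟨v, hu, le_antisymm h1 h2⟩
  | head hab _ ih =>
      rename_i a b _
      intro d h1 h2
      rcases eq_or_lt_of_le h1 with rfl | h1'
      · exact ⟨a, hab.1, rfl⟩
      · rcases adj_ndiag hab.2.2 with hd | hd <;>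
          exact ih hab.2.1 d (by omega) h2

lemma mem_image_range_iff {a : ℤ} {h : ℕ} {d : ℤ} :
    d ∈ (Finset.range h).image (fun j : ℕ => a + (j : ℤ)) ↔ a ≤ d ∧ d < a + h := by
  simp only [mem_image, mem_range]
  constructor
  · rintro ⟨j, hj, rfl⟩; omega
  · rintro ⟨h1, h2⟩
    exact ⟨(d - a).toNat, by omega, by omega⟩

lemma row_mem_iff {a : ℤ} {h : ℕ} {u : Node} :
    u ∈ (Finset.range h).image (fun j : ℕ => ((0 : ℤ), a + (j : ℤ))) ↔
      u.1 = 0 ∧ a ≤ u.2 ∧ u.2 < a + h := by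
  simp only [mem_image, mem_range, Prod.ext_iff]
  constructor
  · rintro ⟨j, hj, h1, h2⟩; omega
  · rintro ⟨h1, h2, h3⟩
    exact ⟨(u.2 - a).toNat, by omega, by omega, by omega⟩

lemma card_filter_image {α β : Type*} [DecidableEq α] {s : Finset β} {f : β → α}
    (hf : Set.InjOn f s) (p : α → Prop) [DecidablePred p] :
    ((s.image f).filter p).card = (s.filter (fun u => p (f u))).card := by
  rw [Finset.filter_image]
  exact Finset.card_image_of_injOn (hf.mono (fun x hx => Finset.mem_filter.mp hx |>.1))

lemma res_eq_ndiag (e : ℕ) (u : Node) : res e u = ((ndiag u : ℤ) : ZMod e) := rfl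

lemma alpha_of_range (e : ℕ) (a : ℤ) (h : ℕ) :
    (fun i => (((Finset.range h).filter
        (fun j : ℕ => (((a + (j : ℤ)) : ℤ) : ZMod e) = i)).card : ℤ))
      = alphaR e ((a : ℤ) : ZMod e) h := by
  funext i
  unfold alphaR
  have heq : Finset.filter (fun j : ℕ => (((a + (j : ℤ)) : ℤ) : ZMod e) = i) (Finset.range h)
      = Finset.filter (fun j : ℕ => ((a : ℤ) : ZMod e) + ((j : ℕ) : ZMod e) = i)
          (Finset.range h) :=
    Finset.filter_congr (fun j _ => by push_cast; tauto)
  rw [heq]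

lemma horiz_path {τ : Finset Node} :
    ∀ n : ℕ, ∀ c : ℤ, (∀ k : ℕ, k ≤ n → ((0 : ℤ), c + (k : ℤ)) ∈ τ) →
      PathIn τ ((0 : ℤ), c) ((0 : ℤ), c + (n : ℤ)) := by
  intro n
  induction n with
  | zero => intro c _; simpa using (show PathIn τ ((0:ℤ), c) ((0:ℤ), c) from Relation.ReflTransGen.refl)
  | succ n ih =>
      intro c hmem
      have h1 : PathIn τ ((0:ℤ), c) ((0:ℤ), c + (n : ℤ)) :=
        ih c (fun k hk => hmem k (by omega))
      refine h1.tail ⟨hmem n (by omega), hmem (n+1) le_rfl, ?_⟩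
      rw [adj_iff]
      show ((0:ℤ) = 0 + 1 ∧ c + ((n+1 : ℕ) : ℤ) = c + (n : ℤ)) ∨
        ((0:ℤ) = 0 - 1 ∧ c + ((n+1 : ℕ) : ℤ) = c + (n : ℤ)) ∨
        ((0:ℤ) = 0 ∧ c + ((n+1 : ℕ) : ℤ) = c + (n : ℤ) + 1) ∨
        ((0:ℤ) = 0 ∧ c + ((n+1 : ℕ) : ℤ) = c + (n : ℤ) - 1)
      refine Or.inr (Or.inr (Or.inl ⟨rfl, ?_⟩))
      push_cast
      ring

lemma row_ribbon (a : ℤ) (h : ℕ) (hh : 1 ≤ h) :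
    IsRibbon ((Finset.range h).image (fun j : ℕ => ((0 : ℤ), a + (j : ℤ)))) := by
  set ξ := (Finset.range h).image (fun j : ℕ => ((0 : ℤ), a + (j : ℤ))) with hξ
  have hmem : ∀ u : Node, u ∈ ξ ↔ u.1 = 0 ∧ a ≤ u.2 ∧ u.2 < a + h := fun u => row_mem_iff
  refine ⟨⟨((0 : ℤ), a), (hmem _).mpr ⟨rfl, by omega, by push_cast; omega⟩⟩, ?_, ?_, ?_⟩
  · intro u hu w hw v huv hvw
    rw [hmem] at hu hw ⊢
    obtain ⟨h1, h2⟩ := huv; obtain ⟨h3, h4⟩ := hvw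
    exact ⟨by omega, by omega, by omega⟩
  · intro u hu v hv
    rw [hmem] at hu hv
    have hu' : u = ((0 : ℤ), u.2) := Prod.ext_iff.mpr ⟨hu.1, rfl⟩
    have hv' : v = ((0 : ℤ), v.2) := Prod.ext_iff.mpr ⟨hv.1, rfl⟩
    rcases le_total u.2 v.2 with hle | hle
    · have := horiz_path (τ := ξ) (v.2 - u.2).toNat u.2 (fun k hk => by
        rw [hmem]; refine ⟨rfl, by omega, by omega⟩)
      rw [hu', hv']
      have h2 : u.2 + ((v.2 - u.2).toNat : ℤ) = v.2 := by omega
      rwa [h2] at this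
    · have := horiz_path (τ := ξ) (u.2 - v.2).toNat v.2 (fun k hk => by
        rw [hmem]; refine ⟨rfl, by omega, by omega⟩)
      rw [hu', hv']
      have h2 : v.2 + ((u.2 - v.2).toNat : ℤ) = u.2 := by omega
      rw [h2] at this
      exact pathIn_symm this
  · intro u hu v hv hd
    rw [hmem] at hu hv
    exact Prod.ext_iff.mpr ⟨by omega, by omega⟩

lemma row_cont (e : ℕ) (a : ℤ) (h : ℕ) :
    cont e ((Finset.range h).image (fun j : ℕ => ((0 : ℤ), a + (j : ℤ))))
      = alphaR e ((a : ℤ) : ZMod e) h := by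
  rw [← alpha_of_range]
  funext i
  unfold cont
  congr 1
  have hinj : Set.InjOn (fun j : ℕ => ((0 : ℤ), a + (j : ℤ))) (Finset.range h) := by
    intro x _ y _ hxy
    simp only [Prod.ext_iff] at hxy
    omega
  rw [card_filter_image hinj]
  congr 1
  apply Finset.filter_congr
  intro j _
  rw [res_eq_ndiag]
  unfold ndiag
  norm_num

theorem stmt9 (e : ℕ) (he : 1 < e) (β : ZMod e → ℤ) (hβ : ∀ i, 0 ≤ β i) :
    IsPosRoot e β ↔ ∃ ξ : Finset Node, IsRibbon ξ ∧ cont e ξ = β := by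
  haveI : NeZero e := ⟨by omega⟩
  constructor
  · rintro ⟨t, h, hh, rfl⟩
    refine ⟨(Finset.range h).image (fun j : ℕ => ((0 : ℤ), (t.val : ℤ) + (j : ℤ))),
      row_ribbon _ _ hh, ?_⟩
    rw [row_cont]
    have ht : (((t.val : ℤ)) : ZMod e) = t := by
      push_cast
      simp [ZMod.natCast_val, ZMod.cast_id]
    rw [ht]
  · rintro ⟨ξ, ⟨hne, hskew, hconn, hthin⟩, rfl⟩
    set h := ξ.card with hcard
    have hh : 1 ≤ h := Finset.Nonempty.card_pos hne
    have hinj : Set.InjOn ndiag ξ := fun u hu v hv huv => hthin u hu v hv huv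
    set D := ξ.image ndiag with hD
    have hDcard : D.card = h := Finset.card_image_of_injOn hinj
    have hDne : D.Nonempty := hne.image _
    set a := D.min' hDne with ha
    set b := D.max' hDne with hb
    have hsub : D = Finset.Icc a b := by
      apply Finset.Subset.antisymm
      · intro d hd
        rw [Finset.mem_Icc]
        exact ⟨Finset.min'_le D d hd, Finset.le_max' D d hd⟩
      · intro d hd
        rw [Finset.mem_Icc] at hd
        obtain ⟨u, hu, hua⟩ := Finset.mem_image.mp (D.min'_mem hDne)
        obtain ⟨v, hv, hvb⟩ := Finset.mem_image.mp (D.max'_mem hDne)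
        obtain ⟨w, hw, hwd⟩ := ivt (hconn u hu v hv) hu d
          (by rw [← ha] at hua; rw [hua]; exact hd.1)
          (by rw [← hb] at hvb; rw [hvb]; exact hd.2)
        exact Finset.mem_image.mpr ⟨w, hw, hwd⟩
    have hbval : b = a + h - 1 := by
      have hc := congrArg Finset.card hsub
      rw [hDcard, Int.card_Icc] at hc
      omega
    refine ⟨((a : ℤ) : ZMod e), h, hh, ?_⟩
    rw [← alpha_of_range]
    funext i
    unfold cont
    congr 1
    have h1 : ξ.filter (fun u => res e u = i)
        = ξ.filter (fun u => ((ndiag u : ℤ) : ZMod e) = i) := rfl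
    rw [h1, ← card_filter_image hinj (fun d : ℤ => ((d : ℤ) : ZMod e) = i)]
    have h2 : ξ.image ndiag = (Finset.range h).image (fun j : ℕ => a + (j : ℤ)) := by
      rw [← hD, hsub, hbval]
      ext d
      rw [Finset.mem_Icc, mem_image_range_iff]
      omega
    rw [h2, card_filter_image (fun x _ y _ hxy => by omega)
      (fun d : ℤ => ((d : ℤ) : ZMod e) = i)]
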